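/- arXiv:1004.0778 — 2 statements merged into one kernel-verified Lean document; each statement's English description precedes it below -/
import Mathlib

section
/- Let R be a commutative ring and M a finitely generated projective R-module, realized as the image of an idempotent matrix e ∈ M_n(R). Then the categorical trace of an endomorphism f : M → M in the symmetric monoidal category of R-modules equals the matrix trace of any matrix F ∈ M_n(R) representing f (i.e. with eFe = F and F inducing f on the image of e). -/
open CategoryTheory MonoidalCategory

/-- The categorical trace of an endomorphism of a dualizable object. -/
noncomputable def catTrace {C : Type*} [Category C] [MonoidalCategory C] [SymmetricCategory C]
    (X : C) [HasRightDual X] (f : X ⟶ X) : 𝟙_ C ⟶ 𝟙_ C :=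
  η_ X Xᘁ ≫ f ▷ Xᘁ ≫ (β_ X Xᘁ).hom ≫ ε_ X Xᘁ

theorem catTrace_eq_matrix_trace {R : Type} [CommRing R] (n : ℕ)
    (e : Matrix (Fin n) (Fin n) R) (he : e * e = e)
    (M : Submodule R (Fin n → R)) (hM : M = LinearMap.range e.mulVecLin)
    (f : M →ₗ[R] M) (F : Matrix (Fin n) (Fin n) R)
    (hF : e * F * e = F)
    (hFf : ∀ x : M, (f x : Fin n → R) = F.mulVec (x : Fin n → R))
    [HasRightDual (ModuleCat.of R M)] :
    catTrace (ModuleCat.of R M) (ModuleCat.ofHom f) =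
      F.trace • 𝟙 (𝟙_ (ModuleCat R)) := by
  -- columns of F lie in M
  have hcolmem : ∀ k : Fin n, (fun j => F j k) ∈ M := by
    intro k
    rw [hM]
    refine ⟨(F * e).mulVec (Pi.single k 1), ?_⟩
    have : e.mulVec ((F * e).mulVec (Pi.single k 1)) = F.mulVec (Pi.single k 1) := by
      rw [Matrix.mulVec_mulVec, ← Matrix.mul_assoc, hF]
    simp only [Matrix.mulVecLin_apply, this]
    ext j
    simp [Matrix.mulVec_single]
  set c : Fin n → (ModuleCat.of R M : Type) := fun k => (⟨fun j => F j k, hcolmem k⟩ : M)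
    with hc
  obtain ⟨S, hS⟩ :=
    TensorProduct.exists_finset (R := R) ((η_ (ModuleCat.of R M) (ModuleCat.of R M)ᘁ) (1 : R))
  -- zigzag identity in element form
  have zig : ∀ m : (ModuleCat.of R M : Type),
      (∑ p ∈ S, (ε_ (ModuleCat.of R M) (ModuleCat.of R M)ᘁ) (p.2 ⊗ₜ[R] m) • p.1) = m := by
    intro m
    have h := congrArg
      (fun (g : 𝟙_ (ModuleCat R) ⊗ ModuleCat.of R M ⟶ ModuleCat.of R M ⊗ 𝟙_ (ModuleCat R)) =>
        ((ρ_ (ModuleCat.of R M)).hom) (g ((1 : R) ⊗ₜ[R] m)))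
      (ExactPairing.evaluation_coevaluation (ModuleCat.of R M) (ModuleCat.of R M)ᘁ)
    simp only [ModuleCat.comp_apply, Function.comp_apply] at h
    rw [show ((η_ (ModuleCat.of R M) (ModuleCat.of R M)ᘁ) ▷ (ModuleCat.of R M))
          ((1 : R) ⊗ₜ[R] m)
        = ((η_ (ModuleCat.of R M) (ModuleCat.of R M)ᘁ) (1 : R)) ⊗ₜ[R] m from rfl,
      hS, TensorProduct.sum_tmul, map_sum, map_sum, map_sum] at h
    simp only [ModuleCat.MonoidalCategory.associator_hom_apply,
      ModuleCat.MonoidalCategory.whiskerLeft_apply,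
      ModuleCat.MonoidalCategory.rightUnitor_hom_apply,
      ModuleCat.MonoidalCategory.leftUnitor_hom_apply,
      ModuleCat.MonoidalCategory.rightUnitor_inv_apply, one_smul] at h
    have e2 : ∀ x ∈ S, ((ρ_ (ModuleCat.of R M)).hom) (((ModuleCat.of R M) ◁ ε_ (ModuleCat.of R M) (ModuleCat.of R M)ᘁ) ((α_ (ModuleCat.of R M) (ModuleCat.of R M)ᘁ (ModuleCat.of R M)).hom (x.1 ⊗ₜ[R] x.2 ⊗ₜ[R] m))) = (ε_ (ModuleCat.of R M) (ModuleCat.of R M)ᘁ) (x.2 ⊗ₜ[R] m) • x.1 := fun x _ => rfl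
    have e3 : (λ_ (ModuleCat.of R M)).hom ((1 : R) ⊗ₜ[R] m) = m := one_smul R m
    rw [Finset.sum_congr rfl e2, e3] at h
    simpa using h
  -- f applied to x, expressed via columns of F
  have hfx : ∀ x : (ModuleCat.of R M : Type), f x = ∑ k, (x.1 k) • c k := by
    intro x
    apply Subtype.ext
    rw [hFf x]
    have : ((∑ k, (x.1 k) • c k : M) : Fin n → R)
        = ∑ k, (x.1 k) • (fun j => F j k) := by
      push_cast [hc]
      rfl
    rw [this]
    funext j
    simp only [Finset.sum_apply, Pi.smul_apply, smul_eq_mul]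
    simp [Matrix.mulVec, dotProduct, mul_comm]
  -- evaluate the trace morphism at 1
  have key : catTrace (ModuleCat.of R M) (ModuleCat.ofHom f) (1 : R) = F.trace := by
    unfold catTrace
    simp only [ModuleCat.comp_apply, Function.comp_apply]
    rw [hS, map_sum, map_sum, map_sum]
    have step : ∀ p : Prod (ModuleCat.of R M : Type) ((ModuleCat.of R M)ᘁ : ModuleCat R),
        p ∈ S →
        (ε_ (ModuleCat.of R M) (ModuleCat.of R M)ᘁ)
            ((β_ (ModuleCat.of R M) (ModuleCat.of R M)ᘁ).hom
              (((ModuleCat.ofHom f) ▷ (ModuleCat.of R M)ᘁ) (p.1 ⊗ₜ[R] p.2)))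
          = ∑ k, (p.1.1 k) *
              (show R from (ε_ (ModuleCat.of R M) (ModuleCat.of R M)ᘁ) (p.2 ⊗ₜ[R] c k)) := by
      intro p _
      rw [ModuleCat.MonoidalCategory.whiskerRight_apply,
        ModuleCat.MonoidalCategory.braiding_hom_apply]
      show (ε_ (ModuleCat.of R M) (ModuleCat.of R M)ᘁ) (p.2 ⊗ₜ[R] f p.1) = _
      rw [hfx p.1, TensorProduct.tmul_sum, map_sum]
      refine Finset.sum_congr rfl fun k _ => ?_
      rw [TensorProduct.tmul_smul, map_smul]
      rfl
    rw [Finset.sum_congr rfl step, Finset.sum_comm]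
    have diag : ∀ k : Fin n,
        (∑ p ∈ S, (p.1.1 k) *
            (show R from (ε_ (ModuleCat.of R M) (ModuleCat.of R M)ᘁ) (p.2 ⊗ₜ[R] c k))) = F k k := by
      intro k
      have h := congrArg (((LinearMap.proj k : (Fin n → R) →ₗ[R] R).comp M.subtype : M →ₗ[R] R))
        (zig (c k))
      rw [map_sum] at h
      simp only [map_smul, smul_eq_mul] at h
      refine Eq.trans (Finset.sum_congr rfl fun p _ => mul_comm _ _) ?_
      exact h
    rw [Finset.sum_congr rfl fun k _ => diag k]
    rfl
  apply ModuleCat.hom_ext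
  apply LinearMap.ext_ring
  rw [ModuleCat.hom_smul, LinearMap.smul_apply]
  show catTrace (ModuleCat.of R M) (ModuleCat.ofHom f) (1 : R) = F.trace • (1 : R)
  rw [key, smul_eq_mul, mul_one]
end

section
/- Let D be a k-linear rigid symmetric monoidal triangulated category (compatibly, in May's sense) that is idempotent complete, over an algebraically closed field k of characteristic zero, and let G be a finite group acting on a distinguished triangle X → Z → Y → X[1] (i.e. compatible actions on X, Z, Y making all three maps G-equivariant). Assume May's additivity: for every distinguished triangle A → C → B → A[1], tr(id_C) = tr(id_A) + tr(id_B). Then for every g ∈ G, tr(g_Z; Z) = tr(g_X; X) + tr(g_Y; Y). -/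
universe u

open CategoryTheory CategoryTheory.Limits CategoryTheory.Pretriangulated MonoidalCategory

theorem ring_aux {R : Type*} [Ring R] (p d : R)
    (h : (p + d) * (p + d) = p + d) (hp : p * p = p) (hd : d * d = 0) :
    (d * p + p * d = d) ∧ p * (d * p) = 0 := by
  have h2 : p + (p * d + d * p) = p + d := by
    calc p + (p * d + d * p)
        = p * p + p * d + (d * p + d * d) := by rw [hp, hd]; abel
      _ = (p + d) * (p + d) := by rw [add_mul, mul_add, mul_add]
      _ = p + d := h
  have h3 : p * d + d * p = d := add_left_cancel h2
  constructor
  · rw [add_comm]; exact h3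
  · have h4 := congrArg (fun x => x * p) h3
    simp only [add_mul, mul_assoc, hp] at h4
    -- h4 : p * (d * p) + d * p = d * p
    have h5 : p * (d * p) + d * p = 0 + d * p := by rw [zero_add]; exact h4
    exact add_right_cancel h5


section TraceLemmas

variable {C : Type*} [Category C] [MonoidalCategory C] [SymmetricCategory C]

theorem catTrace_comm {A B : C} [HasRightDual A] [HasRightDual B] (f : A ⟶ B) (g : B ⟶ A) :
    catTrace A (f ≫ g) = catTrace B (g ≫ f) := by
  unfold catTrace
  calc η_ A Aᘁ ≫ (f ≫ g) ▷ Aᘁ ≫ (β_ A Aᘁ).hom ≫ ε_ A Aᘁ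
      = η_ A Aᘁ ≫ f ▷ Aᘁ ≫ (g ▷ Aᘁ ≫ (β_ A Aᘁ).hom) ≫ ε_ A Aᘁ := by
        simp [MonoidalCategory.comp_whiskerRight]
    _ = η_ A Aᘁ ≫ f ▷ Aᘁ ≫ (β_ B Aᘁ).hom ≫ (Aᘁ ◁ g ≫ ε_ A Aᘁ) := by
        rw [BraidedCategory.braiding_naturality_left]; simp
    _ = η_ A Aᘁ ≫ f ▷ Aᘁ ≫ (β_ B Aᘁ).hom ≫ (gᘁ ▷ B) ≫ ε_ B Bᘁ := by
        rw [← rightAdjointMate_comp_evaluation]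
    _ = η_ A Aᘁ ≫ f ▷ Aᘁ ≫ (B ◁ gᘁ) ≫ (β_ B Bᘁ).hom ≫ ε_ B Bᘁ := by
        rw [← BraidedCategory.braiding_naturality_right_assoc]
    _ = η_ A Aᘁ ≫ (A ◁ gᘁ) ≫ (f ▷ Bᘁ) ≫ (β_ B Bᘁ).hom ≫ ε_ B Bᘁ := by
        rw [← whisker_exchange_assoc]
    _ = η_ B Bᘁ ≫ (g ▷ Bᘁ) ≫ (f ▷ Bᘁ) ≫ (β_ B Bᘁ).hom ≫ ε_ B Bᘁ := by
        rw [coevaluation_comp_rightAdjointMate_assoc]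
    _ = η_ B Bᘁ ≫ (g ≫ f) ▷ Bᘁ ≫ (β_ B Bᘁ).hom ≫ ε_ B Bᘁ := by
        simp [MonoidalCategory.comp_whiskerRight]

variable [Preadditive C] [MonoidalPreadditive C]

theorem catTrace_add {A : C} [HasRightDual A] (f g : A ⟶ A) :
    catTrace A (f + g) = catTrace A f + catTrace A g := by
  simp [catTrace, MonoidalPreadditive.add_whiskerRight, Preadditive.add_comp,
    Preadditive.comp_add]

theorem catTrace_zero (A : C) [HasRightDual A] : catTrace A 0 = 0 := by
  simp [catTrace]

theorem catTrace_sub {A : C} [HasRightDual A] (f g : A ⟶ A) :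
    catTrace A (f - g) = catTrace A f - catTrace A g := by
  have := catTrace_add (f - g) g
  simp only [sub_add_cancel] at this
  rw [this]; abel

theorem catTrace_smul {R : Type*} [Semiring R] [CategoryTheory.Linear R C]
    [MonoidalLinear R C] {A : C} [HasRightDual A] (r : R) (f : A ⟶ A) :
    catTrace A (r • f) = r • catTrace A f := by
  simp [catTrace, MonoidalLinear.smul_whiskerRight, CategoryTheory.Linear.smul_comp,
    CategoryTheory.Linear.comp_smul]

theorem catTrace_sum {J : Type*} (s : Finset J) {A : C} [HasRightDual A] (f : J → (A ⟶ A)) :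
    catTrace A (∑ j ∈ s, f j) = ∑ j ∈ s, catTrace A (f j) := by
  classical
  induction s using Finset.induction with
  | empty => simp [catTrace_zero]
  | insert _ _ h ih => rw [Finset.sum_insert h, Finset.sum_insert h, catTrace_add, ih]


/-- If `f = π + d` with `f, π` idempotent and `d ≫ d = 0`, then `f` and `π` have the
same trace. -/
theorem catTrace_eq_of_idem {W : C} [HasRightDual W] (f π d : W ⟶ W) (hfd : f = π + d)
    (hf : f ≫ f = f) (hπ : π ≫ π = π) (hdd : d ≫ d = 0) :
    catTrace W f = catTrace W π := by
  obtain ⟨hsum, h3⟩ := ring_aux (R := End W) (π : End W) (d : End W)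
    (by rw [(show (π : End W) + d = f from hfd.symm)]; exact hf) hπ hdd
  -- as morphisms: `hsum : π ≫ d + d ≫ π = d` and `h3 : π ≫ d ≫ π = 0`
  have hsum' : π ≫ d + d ≫ π = d := hsum
  have h3' : π ≫ d ≫ π = 0 := by rw [← Category.assoc]; exact h3
  have htrd : catTrace W d = 0 := by
    have hdπ : catTrace W (d ≫ π) = 0 := by
      have e1 : d ≫ π = (d ≫ π) ≫ π := by rw [Category.assoc, hπ]
      rw [e1, catTrace_comm (d ≫ π) π, show π ≫ d ≫ π = (0 : W ⟶ W) from h3', catTrace_zero]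
    have hπd : catTrace W (π ≫ d) = 0 := by rw [catTrace_comm π d]; exact hdπ
    rw [← hsum', catTrace_add, hdπ, hπd, add_zero]
  rw [hfd, catTrace_add, htrd, add_zero]
end TraceLemmas

section BiprodTriang

variable {D : Type*} [Category D] [Preadditive D] [HasZeroObject D] [HasShift D ℤ]
  [∀ n : ℤ, (shiftFunctor D n).Additive] [Pretriangulated D]

/-- The direct sum of two triangles, as a triangle on binary biproducts. -/
@[simps!]
noncomputable def biprodTriangle {X₁ Y₁ Z₁ X₂ Y₂ Z₂ : D}
    (a₁ : X₁ ⟶ Y₁) (b₁ : Y₁ ⟶ Z₁) (c₁ : Z₁ ⟶ X₁⟦(1 : ℤ)⟧)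
    (a₂ : X₂ ⟶ Y₂) (b₂ : Y₂ ⟶ Z₂) (c₂ : Z₂ ⟶ X₂⟦(1 : ℤ)⟧) : Triangle D :=
  Triangle.mk (biprod.map a₁ a₂) (biprod.map b₁ b₂)
    (biprod.desc (c₁ ≫ (biprod.inl : X₁ ⟶ X₁ ⊞ X₂)⟦(1 : ℤ)⟧')
      (c₂ ≫ (biprod.inr : X₂ ⟶ X₁ ⊞ X₂)⟦(1 : ℤ)⟧'))

lemma biprodTriangle_distinguished {X₁ Y₁ Z₁ X₂ Y₂ Z₂ : D}
    (a₁ : X₁ ⟶ Y₁) (b₁ : Y₁ ⟶ Z₁) (c₁ : Z₁ ⟶ X₁⟦(1 : ℤ)⟧)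
    (a₂ : X₂ ⟶ Y₂) (b₂ : Y₂ ⟶ Z₂) (c₂ : Z₂ ⟶ X₂⟦(1 : ℤ)⟧)
    (h₁ : Triangle.mk a₁ b₁ c₁ ∈ distTriang D) (h₂ : Triangle.mk a₂ b₂ c₂ ∈ distTriang D) :
    biprodTriangle a₁ b₁ c₁ a₂ b₂ c₂ ∈ distTriang D := by
  classical
  let F : Bool → Triangle D := fun b => bif b then Triangle.mk a₁ b₁ c₁ else Triangle.mk a₂ b₂ c₂
  have hF : ∀ b, F b ∈ distTriang D := by rintro (_ | _) <;> assumption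
  let e : ∀ (G : Bool → D), (G true) ⊞ (G false) ≅ ∏ᶜ G := fun G =>
    { hom := Pi.lift (fun j => Bool.rec (biprod.snd) (biprod.fst) j)
      inv := biprod.lift (Pi.π G true) (Pi.π G false)
      hom_inv_id := by apply biprod.hom_ext <;> simp
      inv_hom_id := by
        apply Pi.hom_ext
        rintro (_ | _) <;> simp }
  refine isomorphic_distinguished _ (productTriangle_distinguished F hF) _ ?_
  refine Triangle.isoMk _ _ (e (fun b => (F b).obj₁)) (e (fun b => (F b).obj₂))
    (e (fun b => (F b).obj₃)) ?_ ?_ ?_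
  · apply Pi.hom_ext
    rintro (_ | _) <;> dsimp only [e, F, productTriangle, Triangle.mk, cond_true, cond_false, biprodTriangle] <;> erw [Category.assoc, Category.assoc, Pi.lift_π, Limits.Pi.map_π, Pi.lift_π_assoc] <;> simp
  · apply Pi.hom_ext
    rintro (_ | _) <;> dsimp only [e, F, productTriangle, Triangle.mk, cond_true, cond_false, biprodTriangle] <;> erw [Category.assoc, Category.assoc, Pi.lift_π, Limits.Pi.map_π, Pi.lift_π_assoc] <;> simp
  · dsimp only [productTriangle, Triangle.mk, e]
    erw [← Category.assoc, ← cancel_mono (piComparison (shiftFunctor D (1 : ℤ))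
      (fun b => (F b).obj₁))]
    simp only [Category.assoc, IsIso.inv_hom_id, Category.comp_id, map_lift_piComparison]
    apply Pi.hom_ext
    rintro (_ | _) <;>
      · dsimp only [F, Triangle.mk, cond_true, cond_false, biprodTriangle]
        apply biprod.hom_ext' <;>
          erw [Category.assoc, Category.assoc, Category.assoc, piComparison_comp_π, ← Functor.map_comp,
            Pi.lift_π, Limits.Pi.map_π, Pi.lift_π_assoc] <;>
          simp [← Functor.map_comp]

end BiprodTriang


section Split
variable {D : Type*} [Category D] [Preadditive D] [IsIdempotentComplete D]

lemma split_idem {V : D} (p : V ⟶ V) (hp : p ≫ p = p) :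
    ∃ (A A' : D) (iA : A ⟶ V) (rA : V ⟶ A) (iA' : A' ⟶ V) (rA' : V ⟶ A'),
      iA ≫ rA = 𝟙 A ∧ iA' ≫ rA' = 𝟙 A' ∧ rA ≫ iA = p ∧ rA' ≫ iA' = 𝟙 V - p ∧
      iA ≫ rA' = 0 ∧ iA' ≫ rA = 0 ∧ iA ≫ p = iA ∧ iA' ≫ p = 0 ∧
      p ≫ rA = rA ∧ p ≫ rA' = 0 := by
  obtain ⟨A, iA, rA, h1, h2⟩ := IsIdempotentComplete.idempotents_split V p hp
  obtain ⟨A', iA', rA', h1', h2'⟩ := IsIdempotentComplete.idempotents_split V (𝟙 V - p)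
    (by simp [Preadditive.comp_sub, Preadditive.sub_comp, hp])
  have hiAp : iA ≫ p = iA := by rw [← h2, ← Category.assoc, h1, Category.id_comp]
  have hiA'p : iA' ≫ p = 0 := by
    have : iA' ≫ (𝟙 V - p) = iA' := by rw [← h2', ← Category.assoc, h1', Category.id_comp]
    simp only [Preadditive.comp_sub, Category.comp_id] at this
    rw [sub_eq_self] at this
    exact this
  have hprA : p ≫ rA = rA := by rw [← h2, Category.assoc, h1, Category.comp_id]
  have hprA' : p ≫ rA' = 0 := by
    have : (𝟙 V - p) ≫ rA' = rA' := by rw [← h2', Category.assoc, h1', Category.comp_id]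
    simp only [Preadditive.sub_comp, Category.id_comp] at this
    rw [sub_eq_self] at this
    exact this
  refine ⟨A, A', iA, rA, iA', rA', h1, h1', h2, h2', ?_, ?_, hiAp, hiA'p, hprA, hprA'⟩
  · rw [← hiAp, Category.assoc, hprA', Limits.comp_zero]
  · calc iA' ≫ rA = iA' ≫ p ≫ rA := by rw [hprA]
      _ = (iA' ≫ p) ≫ rA := by rw [Category.assoc]
      _ = 0 := by rw [hiA'p, Limits.zero_comp]
end Split

section Key

variable {D : Type*} [Category D] [Preadditive D]
    [MonoidalCategory D] [SymmetricCategory D] [MonoidalPreadditive D]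
    [HasZeroObject D] [HasShift D ℤ] [∀ n : ℤ, (shiftFunctor D n).Additive] [Pretriangulated D]
    [IsIdempotentComplete D] [∀ X : D, HasRightDual X]

theorem catTrace_idem_additive
    (may : ∀ T ∈ distTriang D,
      catTrace T.obj₂ (𝟙 T.obj₂) = catTrace T.obj₁ (𝟙 T.obj₁) + catTrace T.obj₃ (𝟙 T.obj₃))
    {X Z Y : D} (a : X ⟶ Z) (b : Z ⟶ Y) (c : Y ⟶ X⟦(1 : ℤ)⟧)
    (hT : Triangle.mk a b c ∈ distTriang D)
    (pX : X ⟶ X) (pZ : Z ⟶ Z) (pY : Y ⟶ Y)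
    (hpX : pX ≫ pX = pX) (hpZ : pZ ≫ pZ = pZ) (hpY : pY ≫ pY = pY)
    (haa : pX ≫ a = a ≫ pZ) (hbb : pZ ≫ b = b ≫ pY)
    (hcc : pY ≫ c = c ≫ pX⟦(1 : ℤ)⟧') :
    catTrace Z pZ = catTrace X pX + catTrace Y pY := by
  obtain ⟨A, A', iA, rA, iA', rA', hA1, hA1', hA2, hA2', hAz, hAz', hiAp, hiA'p, hprA, hprA'⟩ :=
    split_idem pX hpX
  obtain ⟨B, B', iB, rB, iB', rB', hB1, hB1', hB2, hB2', hBz, hBz', hiBp, hiB'p, hprB, hprB'⟩ :=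
    split_idem pZ hpZ
  -- the isos X ≅ A ⊞ A', Z ≅ B ⊞ B'
  let uX : X ≅ A ⊞ A' :=
    { hom := biprod.lift rA rA'
      inv := biprod.desc iA iA'
      hom_inv_id := by rw [biprod.lift_desc, hA2, hA2']; abel
      inv_hom_id := by
        apply biprod.hom_ext' <;> apply biprod.hom_ext <;>
          simp [hA1, hA1', hAz, hAz'] }
  let uZ : Z ≅ B ⊞ B' :=
    { hom := biprod.lift rB rB'
      inv := biprod.desc iB iB'
      hom_inv_id := by rw [biprod.lift_desc, hB2, hB2']; abel
      inv_hom_id := by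
        apply biprod.hom_ext' <;> apply biprod.hom_ext <;>
          simp [hB1, hB1', hBz, hBz'] }
  -- reassoc'd helpers
  have hiBp' : ∀ {T : D} (h : Z ⟶ T), iB ≫ pZ ≫ h = iB ≫ h := fun h => by
    rw [← Category.assoc, hiBp]
  have hiB'p' : ∀ {T : D} (h : Z ⟶ T), iB' ≫ pZ ≫ h = 0 := fun h => by
    rw [← Category.assoc, hiB'p, Limits.zero_comp]
  have hiAp' : ∀ {T : D} (h : X ⟶ T), iA ≫ pX ≫ h = iA ≫ h := fun h => by
    rw [← Category.assoc, hiAp]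
  have hiA'p' : ∀ {T : D} (h : X ⟶ T), iA' ≫ pX ≫ h = 0 := fun h => by
    rw [← Category.assoc, hiA'p, Limits.zero_comp]
  -- conjugation of the idempotents
  have hXconj : uX.inv ≫ pX ≫ uX.hom = (biprod.fst ≫ biprod.inl : A ⊞ A' ⟶ A ⊞ A') := by
    apply biprod.hom_ext' <;> apply biprod.hom_ext <;>
      simp [uX, hiAp', hiA'p', hA1, hA1', hAz, hAz']
  have hZconj : uZ.inv ≫ pZ ≫ uZ.hom = (biprod.fst ≫ biprod.inl : B ⊞ B' ⟶ B ⊞ B') := by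
    apply biprod.hom_ext' <;> apply biprod.hom_ext <;>
      simp [uZ, hiBp', hiB'p', hB1, hB1', hBz, hBz']
  -- the two summand triangles
  obtain ⟨W₀, b₀, c₀, hS₀⟩ := distinguished_cocone_triangle (iA ≫ a ≫ rB)
  obtain ⟨W₁, b₁, c₁, hS₁⟩ := distinguished_cocone_triangle (iA' ≫ a ≫ rB')
  have hS : biprodTriangle (iA ≫ a ≫ rB) b₀ c₀ (iA' ≫ a ≫ rB') b₁ c₁ ∈ distTriang D :=
    biprodTriangle_distinguished _ _ _ _ _ _ hS₀ hS₁
  have hsq : a ≫ uZ.hom =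
      uX.hom ≫ (biprodTriangle (iA ≫ a ≫ rB) b₀ c₀ (iA' ≫ a ≫ rB') b₁ c₁).mor₁ := by
    dsimp only [biprodTriangle, Triangle.mk]
    apply biprod.hom_ext
    · simp only [biprodTriangle_mor₁, Category.assoc, biprod.map_fst, biprod.lift_fst,
        biprod.lift_fst_assoc, uX, uZ]
      rw [← Category.assoc rA iA, hA2, ← Category.assoc, haa, Category.assoc, hprB]
    · simp only [biprodTriangle_mor₁, Category.assoc, biprod.map_snd, biprod.lift_snd,
        biprod.lift_snd_assoc, uX, uZ]
      rw [← Category.assoc rA' iA', hA2', Preadditive.sub_comp, Category.id_comp,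
        ← Category.assoc pX a, haa, Category.assoc, hprB']
      simp
  -- package the data of the triangle isomorphism
  have main : ∃ (w : Y ⟶ W₀ ⊞ W₁) (winv : W₀ ⊞ W₁ ⟶ Y),
      w ≫ winv = 𝟙 Y ∧
      b ≫ w = uZ.hom ≫ biprod.map b₀ b₁ ∧
      biprod.map b₀ b₁ ≫ winv = uZ.inv ≫ b ∧
      c ≫ uX.hom⟦(1 : ℤ)⟧' = w ≫ biprod.desc
        (c₀ ≫ (biprod.inl : A ⟶ A ⊞ A')⟦(1 : ℤ)⟧')
        (c₁ ≫ (biprod.inr : A' ⟶ A ⊞ A')⟦(1 : ℤ)⟧') ∧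
      biprod.desc (c₀ ≫ (biprod.inl : A ⟶ A ⊞ A')⟦(1 : ℤ)⟧')
        (c₁ ≫ (biprod.inr : A' ⟶ A ⊞ A')⟦(1 : ℤ)⟧') ≫ uX.inv⟦(1 : ℤ)⟧' = winv ≫ c := by
    let ψ := isoTriangleOfIso₁₂ _ _ hT hS uX uZ hsq
    refine ⟨ψ.hom.hom₃, ψ.inv.hom₃, ?_, ?_, ?_, ?_, ?_⟩
    · exact Iso.hom_inv_id_triangle_hom₃ ψ
    · have h := ψ.hom.comm₂
      erw [isoTriangleOfIso₁₂_hom_hom₂] at h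
      exact h
    · have h := ψ.inv.comm₂
      erw [isoTriangleOfIso₁₂_inv_hom₂] at h
      exact h
    · have h := ψ.hom.comm₃
      erw [isoTriangleOfIso₁₂_hom_hom₁] at h
      exact h
    · have h := ψ.inv.comm₃
      erw [isoTriangleOfIso₁₂_inv_hom₁] at h
      exact h
  obtain ⟨w, winv, hww, hbw, hbw', hwc, hwc'⟩ := main
  have hww' : ∀ {T : D} (h : Y ⟶ T), w ≫ winv ≫ h = h := fun h => by
    rw [← Category.assoc, hww, Category.id_comp]
  -- notation
  set π : W₀ ⊞ W₁ ⟶ W₀ ⊞ W₁ := biprod.fst ≫ biprod.inl with hπdef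
  -- f is idempotent
  have hf : (winv ≫ pY ≫ w) ≫ (winv ≫ pY ≫ w) = winv ≫ pY ≫ w := by
    simp only [Category.assoc]
    rw [hww' (pY ≫ w), ← Category.assoc pY pY, hpY]
  have hππ : π ≫ π = π := by rw [hπdef]; simp
  -- transported commutation with mor₂
  have hmor2f : biprod.map b₀ b₁ ≫ (winv ≫ pY ≫ w) =
      (biprod.fst ≫ biprod.inl : B ⊞ B' ⟶ B ⊞ B') ≫ biprod.map b₀ b₁ := by
    calc biprod.map b₀ b₁ ≫ winv ≫ pY ≫ w
        = (biprod.map b₀ b₁ ≫ winv) ≫ pY ≫ w := by rw [Category.assoc]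
      _ = uZ.inv ≫ b ≫ pY ≫ w := by rw [hbw']; simp only [Category.assoc]
      _ = uZ.inv ≫ pZ ≫ b ≫ w := by rw [← Category.assoc b pY, ← hbb, Category.assoc]
      _ = uZ.inv ≫ pZ ≫ uZ.hom ≫ biprod.map b₀ b₁ := by rw [hbw]
      _ = (uZ.inv ≫ pZ ≫ uZ.hom) ≫ biprod.map b₀ b₁ := by simp only [Category.assoc]
      _ = (biprod.fst ≫ biprod.inl : B ⊞ B' ⟶ B ⊞ B') ≫ biprod.map b₀ b₁ := by rw [hZconj]
  have hπmap : (biprod.fst ≫ biprod.inl : B ⊞ B' ⟶ B ⊞ B') ≫ biprod.map b₀ b₁ =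
      biprod.map b₀ b₁ ≫ π := by
    rw [hπdef]; apply biprod.hom_ext' <;> simp
  -- transported commutation with mor₃
  have hmor3f : (winv ≫ pY ≫ w) ≫ biprod.desc (c₀ ≫ (biprod.inl : A ⟶ A ⊞ A')⟦(1 : ℤ)⟧')
        (c₁ ≫ (biprod.inr : A' ⟶ A ⊞ A')⟦(1 : ℤ)⟧') =
      π ≫ biprod.desc (c₀ ≫ (biprod.inl : A ⟶ A ⊞ A')⟦(1 : ℤ)⟧')
        (c₁ ≫ (biprod.inr : A' ⟶ A ⊞ A')⟦(1 : ℤ)⟧') := by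
    have hπc : π ≫ biprod.desc (c₀ ≫ (biprod.inl : A ⟶ A ⊞ A')⟦(1 : ℤ)⟧')
          (c₁ ≫ (biprod.inr : A' ⟶ A ⊞ A')⟦(1 : ℤ)⟧') =
        biprod.desc (c₀ ≫ (biprod.inl : A ⟶ A ⊞ A')⟦(1 : ℤ)⟧')
          (c₁ ≫ (biprod.inr : A' ⟶ A ⊞ A')⟦(1 : ℤ)⟧') ≫
          ((biprod.fst ≫ biprod.inl : A ⊞ A' ⟶ A ⊞ A'))⟦(1 : ℤ)⟧' := by
      rw [hπdef]
      apply biprod.hom_ext' <;> simp [← Functor.map_comp]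
    calc (winv ≫ pY ≫ w) ≫ biprod.desc (c₀ ≫ (biprod.inl : A ⟶ A ⊞ A')⟦(1 : ℤ)⟧')
            (c₁ ≫ (biprod.inr : A' ⟶ A ⊞ A')⟦(1 : ℤ)⟧')
        = winv ≫ pY ≫ (c ≫ uX.hom⟦(1 : ℤ)⟧') := by rw [hwc]; simp only [Category.assoc]
      _ = winv ≫ (pY ≫ c) ≫ uX.hom⟦(1 : ℤ)⟧' := by simp only [Category.assoc]
      _ = winv ≫ (c ≫ pX⟦(1 : ℤ)⟧') ≫ uX.hom⟦(1 : ℤ)⟧' := by rw [hcc]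
      _ = (winv ≫ c) ≫ pX⟦(1 : ℤ)⟧' ≫ uX.hom⟦(1 : ℤ)⟧' := by simp only [Category.assoc]
      _ = (biprod.desc (c₀ ≫ (biprod.inl : A ⟶ A ⊞ A')⟦(1 : ℤ)⟧')
            (c₁ ≫ (biprod.inr : A' ⟶ A ⊞ A')⟦(1 : ℤ)⟧') ≫ uX.inv⟦(1 : ℤ)⟧') ≫
            pX⟦(1 : ℤ)⟧' ≫ uX.hom⟦(1 : ℤ)⟧' := by rw [hwc']
      _ = biprod.desc (c₀ ≫ (biprod.inl : A ⟶ A ⊞ A')⟦(1 : ℤ)⟧')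
            (c₁ ≫ (biprod.inr : A' ⟶ A ⊞ A')⟦(1 : ℤ)⟧') ≫
            (uX.inv ≫ pX ≫ uX.hom)⟦(1 : ℤ)⟧' := by
          simp only [Category.assoc, Functor.map_comp]
      _ = _ := by rw [hXconj, ← hπc]
  -- the difference is square-zero
  have hd3 : ((winv ≫ pY ≫ w) - π) ≫ biprod.desc (c₀ ≫ (biprod.inl : A ⟶ A ⊞ A')⟦(1 : ℤ)⟧')
        (c₁ ≫ (biprod.inr : A' ⟶ A ⊞ A')⟦(1 : ℤ)⟧') = 0 := by
    rw [Preadditive.sub_comp, hmor3f, sub_self]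
  obtain ⟨u, hu⟩ := Triangle.coyoneda_exact₃ _ hS ((winv ≫ pY ≫ w) - π) hd3
  have hdd : ((winv ≫ pY ≫ w) - π) ≫ ((winv ≫ pY ≫ w) - π) = 0 := by
    nth_rewrite 1 [hu]
    erw [Category.assoc]
    have : (biprodTriangle (iA ≫ a ≫ rB) b₀ c₀ (iA' ≫ a ≫ rB') b₁ c₁).mor₂ ≫
        ((winv ≫ pY ≫ w) - π) = 0 := by
      erw [Preadditive.comp_sub]
      rw [show (biprodTriangle (iA ≫ a ≫ rB) b₀ c₀ (iA' ≫ a ≫ rB') b₁ c₁).mor₂ =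
        biprod.map b₀ b₁ from rfl]
      erw [hmor2f, hπmap, sub_self]
    erw [this, Limits.comp_zero]
  -- trace computation
  have htr1 : catTrace _ (winv ≫ pY ≫ w) = catTrace _ π :=
    catTrace_eq_of_idem _ π _ (by abel) hf hππ hdd
  have htr2 : catTrace _ (winv ≫ pY ≫ w) = catTrace Y pY := by
    rw [catTrace_comm winv (pY ≫ w), Category.assoc, hww, Category.comp_id]
  have htr3 : catTrace _ π = catTrace W₀ (𝟙 W₀) := by
    rw [hπdef, catTrace_comm biprod.fst biprod.inl, biprod.inl_fst]
  have may₀ : catTrace B (𝟙 B) = catTrace A (𝟙 A) + catTrace W₀ (𝟙 W₀) := may _ hS₀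
  have htrA : catTrace A (𝟙 A) = catTrace X pX := by
    rw [← hA1, catTrace_comm iA rA, hA2]
  have htrB : catTrace B (𝟙 B) = catTrace Z pZ := by
    rw [← hB1, catTrace_comm iB rB, hB2]
  have htrW : catTrace W₀ (𝟙 W₀) = catTrace Y pY := by
    rw [← htr3, ← htr1, htr2]
  rw [← htrB, may₀, htrA, htrW]

end Key

section Lagrange
open Finset

variable {k : Type*} [Field k] {R : Type*} [Ring R] [Algebra k R]

lemma lag_shift {n : ℕ} (h : ℕ → R) (hper : ∀ m, h (m + n) = h m) :
    ∀ m, ∑ l ∈ range n, h (m + l) = ∑ l ∈ range n, h l := by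
  intro m
  induction m with
  | zero => simp
  | succ m ih =>
    have e1 : ∑ l ∈ range (n + 1), h (m + l) = (∑ l ∈ range n, h (m + (l + 1))) + h (m + 0) :=
      Finset.sum_range_succ' (fun l => h (m + l)) n
    have e2 : ∑ l ∈ range (n + 1), h (m + l) = (∑ l ∈ range n, h (m + l)) + h (m + n) :=
      Finset.sum_range_succ (fun l => h (m + l)) n
    have e3 : ∑ l ∈ range n, h (m + 1 + l) = ∑ l ∈ range n, h (m + (l + 1)) := by
      apply Finset.sum_congr rfl
      intro l _
      congr 1
      omega
    rw [e3]
    have := e1.symm.trans e2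
    -- (∑ l ∈ range n, h (m + (l+1))) + h m = (∑ l ∈ range n, h (m + l)) + h (m + n)
    rw [add_zero] at this
    rw [hper m] at this
    have := add_right_cancel this
    rw [this, ih]

lemma lag_idem {n : ℕ} (hn : 0 < n) (hnk : (n : k) ≠ 0) (x : R) (hx : x ^ n = 1)
    (ω : k) (hω : ω ^ n = 1) :
    ((n : k)⁻¹ • ∑ m ∈ range n, ω ^ m • x ^ m) * ((n : k)⁻¹ • ∑ m ∈ range n, ω ^ m • x ^ m) =
      (n : k)⁻¹ • ∑ m ∈ range n, ω ^ m • x ^ m := by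
  set h : ℕ → R := fun m => ω ^ m • x ^ m with hh
  have hmul : ∀ m l, h m * h l = h (m + l) := by
    intro m l
    simp only [hh, smul_mul_smul_comm, ← pow_add]
  have hper : ∀ m, h (m + n) = h m := by
    intro m
    simp only [hh, pow_add, hω, hx, mul_one]
  have hSS : (∑ m ∈ range n, h m) * (∑ m ∈ range n, h m) = n • ∑ m ∈ range n, h m := by
    rw [Finset.sum_mul_sum]
    calc ∑ m ∈ range n, ∑ l ∈ range n, h m * h l
        = ∑ m ∈ range n, ∑ l ∈ range n, h (m + l) := by
          apply Finset.sum_congr rfl; intro m _; apply Finset.sum_congr rfl; intro l _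
          exact hmul m l
      _ = ∑ _m ∈ range n, ∑ l ∈ range n, h l := by
          apply Finset.sum_congr rfl; intro m _; exact lag_shift h hper m
      _ = n • ∑ l ∈ range n, h l := by rw [Finset.sum_const, card_range]
  rw [smul_mul_smul_comm, hSS, ← Nat.cast_smul_eq_nsmul k, smul_smul]
  congr 1
  field_simp

lemma lag_decomp {n : ℕ} (hn1 : 1 < n) (hnk : (n : k) ≠ 0) (x : R) (hx : x ^ n = 1)
    (ζ : k) (hζ : IsPrimitiveRoot ζ n) :
    ∑ j ∈ range n, ζ ^ j • ((n : k)⁻¹ • ∑ m ∈ range n, ((ζ⁻¹ ^ j) ^ m • x ^ m)) = x := by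
  have hζ0 : ζ ≠ 0 := hζ.ne_zero (by omega)
  have step1 : ∀ j, ζ ^ j • ((n : k)⁻¹ • ∑ m ∈ range n, ((ζ⁻¹ ^ j) ^ m • x ^ m)) =
      (n : k)⁻¹ • ∑ m ∈ range n, (ζ * ζ⁻¹ ^ m) ^ j • x ^ m := by
    intro j
    rw [smul_comm]
    congr 1
    rw [Finset.smul_sum]
    apply Finset.sum_congr rfl
    intro m _
    rw [smul_smul]
    congr 1
    ring
  have hy1 : ∀ m ∈ range n, m ≠ 1 → ζ * ζ⁻¹ ^ m ≠ 1 := by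
    intro m hm hm1 heq
    have hζm : ζ = ζ ^ m := by
      calc ζ = ζ * (ζ⁻¹ ^ m * ζ ^ m) := by
            rw [← mul_pow, inv_mul_cancel₀ hζ0, one_pow, mul_one]
        _ = (ζ * ζ⁻¹ ^ m) * ζ ^ m := by ring
        _ = ζ ^ m := by rw [heq, one_mul]
    rcases Nat.eq_zero_or_pos m with hm0 | hmpos
    · subst hm0
      rw [pow_zero] at hζm
      exact hζ.ne_one hn1 hζm
    · have hsplit : ζ ^ (m - 1) * ζ = ζ ^ m := by
        rw [← pow_succ]
        congr 1
        omega
      have h5 : ζ ^ (m - 1) * ζ = 1 * ζ := by rw [hsplit, one_mul, ← hζm]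
      have hpow : ζ ^ (m - 1) = 1 := mul_right_cancel₀ hζ0 h5
      exact hζ.pow_ne_one_of_pos_of_lt (by omega) (by
        have := Finset.mem_range.mp hm
        omega) hpow
  have hyn : ∀ m : ℕ, (ζ * ζ⁻¹ ^ m) ^ n = 1 := by
    intro m
    have e : (ζ * ζ⁻¹ ^ m) ^ n = ζ ^ n * (ζ⁻¹ ^ n) ^ m := by ring
    rw [e, hζ.pow_eq_one, inv_pow, hζ.pow_eq_one, inv_one, one_pow, mul_one]
  calc ∑ j ∈ range n, ζ ^ j • ((n : k)⁻¹ • ∑ m ∈ range n, ((ζ⁻¹ ^ j) ^ m • x ^ m))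
      = ∑ j ∈ range n, (n : k)⁻¹ • ∑ m ∈ range n, (ζ * ζ⁻¹ ^ m) ^ j • x ^ m :=
        Finset.sum_congr rfl (fun j _ => step1 j)
    _ = (n : k)⁻¹ • ∑ j ∈ range n, ∑ m ∈ range n, (ζ * ζ⁻¹ ^ m) ^ j • x ^ m := by
        rw [Finset.smul_sum]
    _ = (n : k)⁻¹ • ∑ m ∈ range n, (∑ j ∈ range n, (ζ * ζ⁻¹ ^ m) ^ j) • x ^ m := by
        congr 1
        rw [Finset.sum_comm]
        apply Finset.sum_congr rfl
        intro m _
        rw [Finset.sum_smul]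
    _ = (n : k)⁻¹ • ((n : k) • x) := by
        congr 1
        have hsingle : ∑ m ∈ range n, (∑ j ∈ range n, (ζ * ζ⁻¹ ^ m) ^ j) • x ^ m
            = (∑ j ∈ range n, (ζ * ζ⁻¹ ^ 1) ^ j) • x ^ 1 :=
          Finset.sum_eq_single_of_mem 1 (Finset.mem_range.mpr hn1) (fun m hm hm1 => by
            rw [geom_sum_eq (hy1 m hm hm1), hyn, sub_self, zero_div, zero_smul])
        rw [hsingle, pow_one, pow_one, mul_inv_cancel₀ hζ0]
        simp [nsmul_eq_mul]
    _ = x := by rw [smul_smul, inv_mul_cancel₀ hnk, one_smul]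

end Lagrange

theorem equivariant_additivity_of_traces
    {k : Type u} [Field k] [IsAlgClosed k] [CharZero k]
    {D : Type*} [Category D] [Preadditive D] [CategoryTheory.Linear k D]
    [MonoidalCategory D] [SymmetricCategory D] [MonoidalPreadditive D] [MonoidalLinear k D]
    [HasZeroObject D] [HasShift D ℤ] [∀ n : ℤ, (shiftFunctor D n).Additive] [Pretriangulated D]
    [IsIdempotentComplete D] [∀ X : D, HasRightDual X]
    -- May's additivity of traces of identities over distinguished triangles
    (may : ∀ T ∈ distTriang D,
      catTrace T.obj₂ (𝟙 T.obj₂) = catTrace T.obj₁ (𝟙 T.obj₁) + catTrace T.obj₃ (𝟙 T.obj₃))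
    {G : Type u} [Group G] [Fintype G]
    {X Z Y : D} (a : X ⟶ Z) (b : Z ⟶ Y) (c : Y ⟶ X⟦(1 : ℤ)⟧)
    (hT : Triangle.mk a b c ∈ distTriang D)
    (ρX : MonoidAlgebra k G →ₐ[k] End X)
    (ρZ : MonoidAlgebra k G →ₐ[k] End Z)
    (ρY : MonoidAlgebra k G →ₐ[k] End Y)
    (ha : ∀ r, (ρX r : X ⟶ X) ≫ a = a ≫ (ρZ r : Z ⟶ Z))
    (hb : ∀ r, (ρZ r : Z ⟶ Z) ≫ b = b ≫ (ρY r : Y ⟶ Y))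
    (hc : ∀ r, (ρY r : Y ⟶ Y) ≫ c = c ≫ (shiftFunctor D (1 : ℤ)).map (ρX r : X ⟶ X)) :
    ∀ g : G, catTrace Z (ρZ (MonoidAlgebra.of k G g) : Z ⟶ Z) =
      catTrace X (ρX (MonoidAlgebra.of k G g) : X ⟶ X) +
        catTrace Y (ρY (MonoidAlgebra.of k G g) : Y ⟶ Y) := by
  intro g
  have hg : g ^ (orderOf g) = 1 := pow_orderOf_eq_one g
  set n := orderOf g with hndef
  have hn : 0 < n := orderOf_pos g
  set x : MonoidAlgebra k G := MonoidAlgebra.of k G g with hxdef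
  have hx : x ^ n = 1 := by rw [hxdef, ← map_pow, hg, map_one]
  by_cases h1 : n = 1
  · have hg1 : g = 1 := orderOf_eq_one_iff.mp h1
    have hx1 : x = 1 := by rw [hxdef, hg1]; exact map_one _
    rw [hx1, map_one ρX, map_one ρZ, map_one ρY]
    exact may _ hT
  · have hn1 : 1 < n := by omega
    have hnk : (n : k) ≠ 0 := Nat.cast_ne_zero.mpr (by omega)
    haveI : NeZero ((n : k)) := ⟨hnk⟩
    obtain ⟨ζ, hζ⟩ := HasEnoughRootsOfUnity.exists_primitiveRoot k n
    have hζ0 : ζ ≠ 0 := hζ.ne_zero (by omega)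
    set E : ℕ → MonoidAlgebra k G :=
      fun j => (n : k)⁻¹ • ∑ m ∈ Finset.range n, ((ζ⁻¹ ^ j) ^ m • x ^ m) with hEdef
    have hidem : ∀ j, E j * E j = E j := fun j => lag_idem hn hnk x hx (ζ⁻¹ ^ j)
      (by rw [← pow_mul, mul_comm, pow_mul, inv_pow, hζ.pow_eq_one, inv_one, one_pow])
    have hdecomp : ∑ j ∈ Finset.range n, ζ ^ j • E j = x := lag_decomp hn1 hnk x hx ζ hζ
    have hkey : ∀ j, catTrace Z (ρZ (E j) : Z ⟶ Z) =
        catTrace X (ρX (E j) : X ⟶ X) + catTrace Y (ρY (E j) : Y ⟶ Y) := by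
      intro j
      refine catTrace_idem_additive may a b c hT _ _ _ ?_ ?_ ?_ (ha (E j)) (hb (E j)) (hc (E j))
      · have h2 : (ρX (E j)) * (ρX (E j)) = ρX (E j) := by rw [← map_mul, hidem j]
        exact h2
      · have h2 : (ρZ (E j)) * (ρZ (E j)) = ρZ (E j) := by rw [← map_mul, hidem j]
        exact h2
      · have h2 : (ρY (E j)) * (ρY (E j)) = ρY (E j) := by rw [← map_mul, hidem j]
        exact h2
    have hlin : ∀ (V : D) (ρ : MonoidAlgebra k G →ₐ[k] End V),
        catTrace V (ρ x : V ⟶ V) =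
          ∑ j ∈ Finset.range n, ζ ^ j • catTrace V (ρ (E j) : V ⟶ V) := by
      intro V ρ
      conv_lhs => rw [← hdecomp, map_sum]
      rw [catTrace_sum]
      apply Finset.sum_congr rfl
      intro j _
      rw [map_smul, catTrace_smul]
    calc catTrace Z (ρZ x : Z ⟶ Z)
        = ∑ j ∈ Finset.range n, ζ ^ j • catTrace Z (ρZ (E j) : Z ⟶ Z) := hlin Z ρZ
      _ = ∑ j ∈ Finset.range n, (ζ ^ j • catTrace X (ρX (E j) : X ⟶ X) +
            ζ ^ j • catTrace Y (ρY (E j) : Y ⟶ Y)) := by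
          apply Finset.sum_congr rfl
          intro j _
          rw [hkey j, smul_add]
      _ = (∑ j ∈ Finset.range n, ζ ^ j • catTrace X (ρX (E j) : X ⟶ X)) +
            ∑ j ∈ Finset.range n, ζ ^ j • catTrace Y (ρY (E j) : Y ⟶ Y) :=
          Finset.sum_add_distrib
      _ = catTrace X (ρX x : X ⟶ X) + catTrace Y (ρY x : Y ⟶ Y) := by
          rw [← hlin X ρX, ← hlin Y ρY]
end
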